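/- Let n ≥ 3 be an integer and define H(t) = ∫₀^∞ (t+σ)^{−3/2}(1+σ)^{−(n−1)/2} dσ for t > 0. Then H is differentiable on (0,+∞) and satisfies the identity −n H(t) + 2(1−t) H′(t) + 2 t^{−3/2} = 0 for every t > 0. -/

import Mathlib

open MeasureTheory Set Filter Topology
open scoped ENNReal NNReal Real BigOperators RealInnerProductSpace

noncomputable section

attribute [local instance] Classical.propDecidable

/-- `ℝⁿ` as a Euclidean space. -/
abbrev Euc (n : ℕ) := EuclideanSpace ℝ (Fin n)

/-- The anisotropic interaction kernel `W_α`, with values in `[0,+∞]`: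
`W_α(x) = 1/|x|^(n-2) + α x₁²/|x|ⁿ` for `x ≠ 0`, and `W_α(0) = +∞`. -/
def kerW (n : ℕ) [NeZero n] (α : ℝ) (x : Euc n) : ℝ≥0∞ :=
  if x = 0 then ⊤
  else ENNReal.ofReal (1 / ‖x‖ ^ (n - 2) + α * (x 0) ^ 2 / ‖x‖ ^ n)

/-- The nonlocal energy `I_α(μ) = ∬ W_α(x-y) dμ(x)dμ(y) + ∫ |x|² dμ(x)`. -/
def energyI (n : ℕ) [NeZero n] (α : ℝ) (μ : Measure (Euc n)) : ℝ≥0∞ :=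
  (∫⁻ p : Euc n × Euc n, kerW n α (p.1 - p.2) ∂(μ.prod μ)) +
    ∫⁻ x, ENNReal.ofReal (‖x‖ ^ 2) ∂μ


/-- The elliptic-type integral `H(t) = ∫₀^∞ (t+σ)^{-3/2}(1+σ)^{-(n-1)/2} dσ`. -/
def Hfun (n : ℕ) (t : ℝ) : ℝ :=
  ∫ σ in Ioi (0 : ℝ), (t + σ) ^ (-(3 / 2) : ℝ) * (1 + σ) ^ (-(((n : ℝ) - 1) / 2))

lemma contAux {x a c : ℝ} (hx : 0 < x) :
    ContinuousOn (fun σ : ℝ => (x + σ) ^ a * (1 + σ) ^ c) (Ici 0) := by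
  apply ContinuousOn.mul
  · apply ContinuousOn.rpow_const (by fun_prop)
    intro y hy; left; have : (0:ℝ) ≤ y := hy; positivity
  · apply ContinuousOn.rpow_const (by fun_prop)
    intro y hy; left; have : (0:ℝ) ≤ y := hy; positivity

lemma measAux {x a c : ℝ} (hx : 0 < x) :
    AEStronglyMeasurable (fun σ : ℝ => (x + σ) ^ a * (1 + σ) ^ c)
      (volume.restrict (Ioi 0)) :=
  ((contAux hx).mono Ioi_subset_Ici_self).aestronglyMeasurable measurableSet_Ioi

lemma integrableAux {t b c : ℝ} (ht : 0 < t) (hb : b ≤ 0) (hbc : b + c < -1) :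
    MeasureTheory.IntegrableOn (fun σ : ℝ => (t + σ) ^ b * (1 + σ) ^ c) (Ioi 0) := by
  have hcont := contAux (a := b) (c := c) ht
  have h1 : IntegrableOn (fun σ : ℝ => (t + σ) ^ b * (1 + σ) ^ c) (Ioc 0 1) :=
    ((hcont.mono Icc_subset_Ici_self).integrableOn_Icc).mono_set Ioc_subset_Icc_self
  have h2 : IntegrableOn (fun σ : ℝ => (t + σ) ^ b * (1 + σ) ^ c) (Ioi 1) := by
    have hmaj : IntegrableOn (fun σ : ℝ => (min t 1) ^ b * σ ^ (b + c)) (Ioi 1) :=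
      (integrableOn_Ioi_rpow_of_lt hbc one_pos).const_mul _
    apply hmaj.mono'
    · exact (hcont.mono (show Ioi (1:ℝ) ⊆ Ici 0 from
          fun x (hx : (1:ℝ) < x) => show (0:ℝ) ≤ x from le_of_lt (lt_trans one_pos hx))).aestronglyMeasurable
        measurableSet_Ioi
    · filter_upwards [ae_restrict_mem measurableSet_Ioi] with σ hσ
      have hσ1 : (1:ℝ) < σ := hσ
      have hσ0 : (0:ℝ) < σ := one_pos.trans hσ1
      have hts : 0 < t + σ := by positivity
      have h1s : 0 < 1 + σ := by positivity
      rw [Real.norm_eq_abs, abs_of_nonneg (by positivity)]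
      have key1 : (t + σ) ^ b ≤ (min t 1 * (1 + σ)) ^ b := by
        apply Real.rpow_le_rpow_of_nonpos (by positivity) _ hb
        have ha : min t 1 ≤ t := min_le_left _ _
        have hbb : min t 1 ≤ 1 := min_le_right _ _
        nlinarith [hσ0.le]
      calc (t + σ) ^ b * (1 + σ) ^ c ≤ (min t 1 * (1+σ)) ^ b * (1 + σ) ^ c :=
            mul_le_mul_of_nonneg_right key1 (Real.rpow_nonneg h1s.le c)
        _ = (min t 1) ^ b * ((1+σ) ^ b * (1 + σ) ^ c) := by
            rw [Real.mul_rpow (by positivity) h1s.le]; ring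
        _ = (min t 1) ^ b * (1+σ) ^ (b + c) := by rw [← Real.rpow_add h1s]
        _ ≤ (min t 1) ^ b * σ ^ (b + c) := by
            apply mul_le_mul_of_nonneg_left _ (Real.rpow_nonneg (by positivity) b)
            exact Real.rpow_le_rpow_of_nonpos hσ0 (by linarith) (by linarith)
  rw [← Ioc_union_Ioi_eq_Ioi (zero_le_one' ℝ)]
  exact h1.union h2


/-- `H` is differentiable on `(0,∞)` and satisfies
`-n H(t) + 2(1-t) H'(t) + 2 t^{-3/2} = 0` for every `t > 0`. -/
theorem statement13 (n : ℕ) (hn : 3 ≤ n) :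
    ∀ t : ℝ, 0 < t →
      DifferentiableAt ℝ (Hfun n) t ∧
      -(n : ℝ) * Hfun n t + 2 * (1 - t) * deriv (Hfun n) t
        + 2 * t ^ (-(3 / 2) : ℝ) = 0 := by
  intro t ht
  have hn3 : (3:ℝ) ≤ (n:ℝ) := by exact_mod_cast hn
  have hp1 : 1 ≤ ((n:ℝ) - 1) / 2 := by linarith
  -- integrability of the two basic integrands
  have intf : IntegrableOn
      (fun σ : ℝ => (t + σ) ^ (-(3/2):ℝ) * (1 + σ) ^ (-(((n:ℝ)-1)/2))) (Ioi 0) :=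
    integrableAux ht (by norm_num) (by linarith)
  have intg : IntegrableOn
      (fun σ : ℝ => (t + σ) ^ (-(5/2):ℝ) * (1 + σ) ^ (-(((n:ℝ)-1)/2))) (Ioi 0) :=
    integrableAux ht (by norm_num) (by linarith)
  -- differentiation under the integral
  have hFmeas : ∀ᶠ x in 𝓝 t, AEStronglyMeasurable
      (fun σ : ℝ => (x + σ) ^ (-(3/2):ℝ) * (1 + σ) ^ (-(((n:ℝ)-1)/2)))
      (volume.restrict (Ioi 0)) := by
    filter_upwards [eventually_gt_nhds ht] with x hx
    exact measAux hx
  have hbound : ∀ᵐ σ ∂(volume.restrict (Ioi (0:ℝ))), ∀ x ∈ Metric.ball t (t/2),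
      ‖-(3/2) * ((x + σ) ^ (-(5/2):ℝ) * (1 + σ) ^ (-(((n:ℝ)-1)/2)))‖
        ≤ (3/2) * ((t/2 + σ) ^ (-(5/2):ℝ) * (1 + σ) ^ (-(((n:ℝ)-1)/2))) := by
    rw [ae_restrict_iff' measurableSet_Ioi]
    filter_upwards with σ hσ x hx
    have hσ0 : (0:ℝ) < σ := hσ
    have hx2 : t/2 < x := by
      have := Metric.mem_ball.mp hx
      rw [Real.dist_eq, abs_lt] at this
      linarith [this.1]
    have hxσ : 0 < x + σ := by linarith
    have h1s : (0:ℝ) < 1 + σ := by positivity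
    have hts : (0:ℝ) < t/2 + σ := by positivity
    rw [Real.norm_eq_abs, abs_mul,
      abs_of_nonneg (by positivity : (0:ℝ) ≤ (x+σ)^(-(5/2):ℝ)*(1+σ)^(-(((n:ℝ)-1)/2)))]
    rw [show |(-(3/2):ℝ)| = 3/2 by norm_num]
    apply mul_le_mul_of_nonneg_left _ (by norm_num)
    apply mul_le_mul_of_nonneg_right _ (Real.rpow_nonneg h1s.le _)
    exact Real.rpow_le_rpow_of_nonpos hts (by linarith) (by norm_num)
  have hbint : Integrable
      (fun σ : ℝ => (3/2) * ((t/2 + σ) ^ (-(5/2):ℝ) * (1 + σ) ^ (-(((n:ℝ)-1)/2))))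
      (volume.restrict (Ioi 0)) :=
    (integrableAux (half_pos ht) (by norm_num) (by linarith)).const_mul _
  have hdiff : ∀ᵐ σ ∂(volume.restrict (Ioi (0:ℝ))), ∀ x ∈ Metric.ball t (t/2),
      HasDerivAt (fun y : ℝ => (y + σ) ^ (-(3/2):ℝ) * (1 + σ) ^ (-(((n:ℝ)-1)/2)))
        (-(3/2) * ((x + σ) ^ (-(5/2):ℝ) * (1 + σ) ^ (-(((n:ℝ)-1)/2)))) x := by
    rw [ae_restrict_iff' measurableSet_Ioi]
    filter_upwards with σ hσ x hx
    have hσ0 : (0:ℝ) < σ := hσ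
    have hx2 : t/2 < x := by
      have := Metric.mem_ball.mp hx
      rw [Real.dist_eq, abs_lt] at this
      linarith [this.1]
    have hxσ : 0 < x + σ := by linarith
    have d1 : HasDerivAt (fun y : ℝ => (y + σ) ^ (-(3/2):ℝ))
        ((-(3/2)) * (x + σ) ^ ((-(3/2):ℝ) - 1)) x := by
      have h0 : HasDerivAt (fun y : ℝ => y + σ) 1 x := (hasDerivAt_id x).add_const σ
      have := (Real.hasDerivAt_rpow_const (x := x + σ) (p := (-(3/2):ℝ))
        (Or.inl hxσ.ne')).comp x h0
      simpa [Function.comp_def] using this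
    have hd := d1.mul_const ((1 + σ) ^ (-(((n:ℝ)-1)/2)))
    refine hd.congr_deriv ?_
    rw [show ((-(3/2):ℝ) - 1) = -(5/2) by norm_num]
    ring
  have hder0 := hasDerivAt_integral_of_dominated_loc_of_deriv_le
      (μ := volume.restrict (Ioi 0)) (x₀ := t) (s := Metric.ball t (t/2))
      (F := fun x σ => (x + σ) ^ (-(3/2):ℝ) * (1 + σ) ^ (-(((n:ℝ)-1)/2)))
      (F' := fun x σ => -(3/2) * ((x + σ) ^ (-(5/2):ℝ) * (1 + σ) ^ (-(((n:ℝ)-1)/2))))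
      (bound := fun σ => (3/2) * ((t/2 + σ) ^ (-(5/2):ℝ) * (1 + σ) ^ (-(((n:ℝ)-1)/2))))
      (Metric.ball_mem_nhds t (half_pos ht)) hFmeas intf ((measAux ht).const_mul _) hbound hbint hdiff
  -- extract the derivative
  obtain ⟨-, hder⟩ := hder0
  rw [MeasureTheory.integral_const_mul] at hder
  have hderH : HasDerivAt (Hfun n)
      (-(3/2) * ∫ σ in Ioi (0:ℝ), (t + σ) ^ (-(5/2):ℝ) * (1 + σ) ^ (-(((n:ℝ)-1)/2))) t := hder
  -- FTC identity
  have hftc : (∫ σ in Ioi (0:ℝ),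
      (-(n:ℝ) * ((t+σ) ^ (-(3/2):ℝ) * (1+σ) ^ (-(((n:ℝ)-1)/2)))
        - 3*(1-t) * ((t+σ) ^ (-(5/2):ℝ) * (1+σ) ^ (-(((n:ℝ)-1)/2)))))
      = 0 - 2 * ((t+0) ^ (-(3/2):ℝ) * (1+0) ^ (1 - ((n:ℝ)-1)/2)) := by
    apply integral_Ioi_of_hasDerivAt_of_tendsto
      (f := fun σ => 2 * ((t+σ) ^ (-(3/2):ℝ) * (1+σ) ^ (1 - ((n:ℝ)-1)/2)))
    · exact ((continuousOn_const.mul (contAux ht)) 0 self_mem_Ici)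
    · intro σ hσ
      have hσ0 : (0:ℝ) < σ := hσ
      have hts : (0:ℝ) < t + σ := by positivity
      have h1s : (0:ℝ) < 1 + σ := by positivity
      have d1 : HasDerivAt (fun y : ℝ => (t + y) ^ (-(3/2):ℝ))
          ((-(3/2)) * (t + σ) ^ ((-(3/2):ℝ) - 1)) σ := by
        have h0 : HasDerivAt (fun y : ℝ => t + y) 1 σ := (hasDerivAt_id σ).const_add t
        have := (Real.hasDerivAt_rpow_const (x := t + σ) (p := (-(3/2):ℝ))
          (Or.inl hts.ne')).comp σ h0
        simpa [Function.comp_def] using this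
      have d2 : HasDerivAt (fun y : ℝ => (1 + y) ^ (1 - ((n:ℝ)-1)/2))
          ((1 - ((n:ℝ)-1)/2) * (1 + σ) ^ ((1 - ((n:ℝ)-1)/2) - 1)) σ := by
        have h0 : HasDerivAt (fun y : ℝ => 1 + y) 1 σ := (hasDerivAt_id σ).const_add 1
        have := (Real.hasDerivAt_rpow_const (x := 1 + σ) (p := (1 - ((n:ℝ)-1)/2))
          (Or.inl h1s.ne')).comp σ h0
        simpa [Function.comp_def] using this
      have dG := (d1.mul d2).const_mul (2:ℝ)
      refine dG.congr_deriv ?_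
      rw [show ((-(3/2):ℝ) - 1) = -(5/2) by norm_num,
        show ((1 - ((n:ℝ)-1)/2) - 1) = -(((n:ℝ)-1)/2) by ring,
        show (1 - ((n:ℝ)-1)/2) = 1 + -(((n:ℝ)-1)/2) by ring,
        Real.rpow_add h1s, Real.rpow_one,
        show ((-(3/2):ℝ)) = 1 + -(5/2) by norm_num,
        Real.rpow_add hts, Real.rpow_one]
      ring
    · exact (intf.const_mul _).sub (intg.const_mul _)
    · -- tendsto 0 at top
      apply squeeze_zero' (g := fun σ : ℝ => 2 * (t + σ) ^ (-(3/2):ℝ))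
      · filter_upwards [eventually_ge_atTop (0:ℝ)] with σ hσ
        have hts : (0:ℝ) < t + σ := by linarith
        have h1s : (0:ℝ) < 1 + σ := by linarith
        positivity
      · filter_upwards [eventually_ge_atTop (0:ℝ)] with σ hσ
        have hts : (0:ℝ) < t + σ := by linarith
        have h1s : (1:ℝ) ≤ 1 + σ := by linarith
        have : (1+σ) ^ (1 - ((n:ℝ)-1)/2) ≤ 1 :=
          Real.rpow_le_one_of_one_le_of_nonpos h1s (by linarith)
        calc 2 * ((t+σ) ^ (-(3/2):ℝ) * (1+σ) ^ (1 - ((n:ℝ)-1)/2))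
            ≤ 2 * ((t+σ) ^ (-(3/2):ℝ) * 1) := by
              apply mul_le_mul_of_nonneg_left _ (by norm_num)
              exact mul_le_mul_of_nonneg_left this (Real.rpow_nonneg hts.le _)
          _ = 2 * (t+σ) ^ (-(3/2):ℝ) := by ring
      · have h1 : Tendsto (fun σ : ℝ => t + σ) atTop atTop :=
          tendsto_atTop_add_const_left _ t tendsto_id
        have h2 := (tendsto_rpow_neg_atTop (by norm_num : (0:ℝ) < 3/2)).comp h1
        have := h2.const_mul (2:ℝ)
        simpa using this
  rw [MeasureTheory.integral_sub (intf.const_mul _) (intg.const_mul _),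
    MeasureTheory.integral_const_mul, MeasureTheory.integral_const_mul] at hftc
  simp only [add_zero, Real.one_rpow, mul_one] at hftc
  refine ⟨hderH.differentiableAt, ?_⟩
  rw [hderH.deriv]
  have hH : Hfun n t
      = ∫ σ in Ioi (0:ℝ), (t+σ) ^ (-(3/2):ℝ) * (1+σ) ^ (-(((n:ℝ)-1)/2)) := rfl
  rw [hH]
  set A := ∫ σ in Ioi (0:ℝ), (t+σ) ^ (-(3/2):ℝ) * (1+σ) ^ (-(((n:ℝ)-1)/2))
  set B := ∫ σ in Ioi (0:ℝ), (t+σ) ^ (-(5/2):ℝ) * (1+σ) ^ (-(((n:ℝ)-1)/2))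
  nlinarith [hftc]
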